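/- Let U, G, H be subgroups of an abelian group A with H ≤ G and both of finite index situations as needed. Then (UG : UH) · (G ∩ U : H ∩ U) = (G : H), i.e. (UG : UH) = (G : H) / (U ∩ G : U ∩ H) whenever the indices are finite. -/

import Mathlib

/-- For subgroups `U, G, H` of an abelian group `A` with `H ≤ G` and `H` of finite
index in `G`, one has `(UG : UH) · (G ∩ U : H ∩ U) = (G : H)`. -/
theorem index_product_formula {A : Type*} [CommGroup A] (U G H : Subgroup A)
    (hHG : H ≤ G) (hfin : H.relIndex G ≠ 0) :
    (U ⊔ H).relIndex (U ⊔ G) * (H ⊓ U).relIndex (G ⊓ U) = H.relIndex G := by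
  have h1 : (U ⊔ H).relIndex (U ⊔ G) = ((U ⊔ H) ⊓ G).relIndex G := by
    rw [Subgroup.inf_relIndex_right]
    have : U ⊔ G = G ⊔ (U ⊔ H) := by
      rw [sup_comm U G, ← sup_assoc]
      exact (sup_of_le_left (hHG.trans le_sup_left)).symm
    rw [this, Subgroup.relIndex_sup_right]
  have h2 : (H ⊓ U).relIndex (G ⊓ U) = H.relIndex ((U ⊔ H) ⊓ G) := by
    have hmod : (U ⊔ H) ⊓ G = (U ⊓ G) ⊔ H := by
      rw [sup_comm U H, sup_inf_assoc_of_le U hHG, sup_comm]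
    have hinf : H ⊓ (G ⊓ U) = H ⊓ U := by rw [← inf_assoc, inf_of_le_left hHG]
    rw [hmod, Subgroup.relIndex_sup_right, ← Subgroup.inf_relIndex_right H (U ⊓ G),
      inf_comm U G, hinf]
  rw [h1, h2, mul_comm]
  exact Subgroup.relIndex_mul_relIndex _ _ _ (le_inf le_sup_right hHG) inf_le_right
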